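/- Let K be symmetric positive semi-definite and K_G symmetric, with the canonical form: invertible W = [W_1, W_2, W_3], W^T K_G W = diag(Λ_1, Λ_2, 0), W^T K W = diag(I_{n_1}, 0, 0), Λ_2 invertible, and W_3^T W_1 = W_3^T W_2 = 0. Let Z = [Z_N, Z_C] be a basis of N(K) with Z_C a basis of the common nullspace Z_c. Then for any positive definite matrices H_N, H_C, the matrix M = K + (K_G Z_N) H_N (K_G Z_N)^T + Z_C H_C Z_C^T is positive definite. -/

import Mathlib

open Matrix

section aux

variable {n : Type*} [Fintype n] [DecidableEq n]

private lemma transpose_mulVec_eq_zero {W : Matrix n n ℝ} (hW : IsUnit W)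
    {v : n → ℝ} (h : Wᵀ *ᵥ v = 0) : v = 0 := by
  have hdet : IsUnit Wᵀ.det := by
    rw [Matrix.det_transpose]
    exact (Matrix.isUnit_iff_isUnit_det W).mp hW
  have h2 : (Wᵀ)⁻¹ *ᵥ (Wᵀ *ᵥ v) = 0 := by rw [h, Matrix.mulVec_zero]
  rwa [Matrix.mulVec_mulVec, Matrix.nonsing_inv_mul _ hdet, Matrix.one_mulVec] at h2

end aux

/-- With K positive semi-definite, the canonical form of (K, K_G),
Z = [Z_N Z_C] a basis of N(K), Z_C a basis of the common nullspace Z_c, and H_N, H_C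
positive definite, the matrix M = K + (K_G Z_N) H_N (K_G Z_N)ᵀ + Z_C H_C Z_Cᵀ is
positive definite. -/
theorem stmt15 {n1 n2 n3 : ℕ}
    (K KG : Matrix (Fin n1 ⊕ (Fin n2 ⊕ Fin n3)) (Fin n1 ⊕ (Fin n2 ⊕ Fin n3)) ℝ)
    (hKpsd : K.PosSemidef) (hKG : KGᵀ = KG)
    (W : Matrix (Fin n1 ⊕ (Fin n2 ⊕ Fin n3)) (Fin n1 ⊕ (Fin n2 ⊕ Fin n3)) ℝ)
    (hW : IsUnit W)
    (Λ1 : Fin n1 → ℝ) (Λ2 : Fin n2 → ℝ) (hΛ2 : ∀ i, Λ2 i ≠ 0)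
    (hcanKG : Wᵀ * KG * W
      = Matrix.fromBlocks (Matrix.diagonal Λ1) 0 0
          (Matrix.fromBlocks (Matrix.diagonal Λ2) 0 0 0))
    (hcanK : Wᵀ * K * W
      = Matrix.fromBlocks (1 : Matrix (Fin n1) (Fin n1) ℝ) 0 0 0)
    (hW31 : (W.submatrix id (Sum.inr ∘ Sum.inr : Fin n3 → _))ᵀ
      * W.submatrix id (Sum.inl : Fin n1 → _) = 0)
    (hW32 : (W.submatrix id (Sum.inr ∘ Sum.inr : Fin n3 → _))ᵀ
      * W.submatrix id (Sum.inr ∘ Sum.inl : Fin n2 → _) = 0)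
    (ZN : Matrix (Fin n1 ⊕ (Fin n2 ⊕ Fin n3)) (Fin n2) ℝ)
    (ZC : Matrix (Fin n1 ⊕ (Fin n2 ⊕ Fin n3)) (Fin n3) ℝ)
    (hZind : LinearIndependent ℝ (Matrix.fromCols ZN ZC)ᵀ)
    (hZspan : LinearMap.range (Matrix.fromCols ZN ZC).mulVecLin
      = LinearMap.ker K.mulVecLin)
    (hZCind : LinearIndependent ℝ ZCᵀ)
    (hZCspan : LinearMap.range ZC.mulVecLin
      = LinearMap.ker K.mulVecLin ⊓ LinearMap.ker KG.mulVecLin)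
    (HN : Matrix (Fin n2) (Fin n2) ℝ) (HC : Matrix (Fin n3) (Fin n3) ℝ)
    (hHN : HN.PosDef) (hHC : HC.PosDef) :
    (K + (KG * ZN) * HN * (KG * ZN)ᵀ + ZC * HC * ZCᵀ).PosDef := by
  classical
  -- KG annihilates the range of ZC
  have hKGZC : ∀ c : Fin n3 → ℝ, KG *ᵥ (ZC *ᵥ c) = 0 := by
    intro c
    have hmem : ZC.mulVecLin c ∈ LinearMap.range ZC.mulVecLin := ⟨c, rfl⟩
    rw [hZCspan] at hmem
    exact hmem.2
  -- positive semidefiniteness of the three summands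
  have hM1 : ((KG * ZN) * HN * (KG * ZN)ᵀ).PosSemidef := by
    have := hHN.posSemidef.mul_mul_conjTranspose_same (KG * ZN)
    simpa using this
  have hM2 : (ZC * HC * ZCᵀ).PosSemidef := by
    have := hHC.posSemidef.mul_mul_conjTranspose_same ZC
    simpa using this
  have hMpsd := (hKpsd.add hM1).add hM2
  refine Matrix.PosDef.of_dotProduct_mulVec_pos hMpsd.isHermitian ?_
  intro x hx
  rcases lt_or_eq_of_le (hMpsd.dotProduct_mulVec_nonneg x) with h | h
  · exact h
  exfalso
  apply hx
  -- the three quadratic forms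
  have hq1 : (0:ℝ) ≤ x ⬝ᵥ K *ᵥ x := by simpa using hKpsd.dotProduct_mulVec_nonneg x
  have hq2 : (0:ℝ) ≤ x ⬝ᵥ ((KG * ZN) * HN * (KG * ZN)ᵀ) *ᵥ x := by simpa using hM1.dotProduct_mulVec_nonneg x
  have hq3 : (0:ℝ) ≤ x ⬝ᵥ (ZC * HC * ZCᵀ) *ᵥ x := by simpa using hM2.dotProduct_mulVec_nonneg x
  have hsum : x ⬝ᵥ K *ᵥ x + x ⬝ᵥ ((KG * ZN) * HN * (KG * ZN)ᵀ) *ᵥ x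
      + x ⬝ᵥ (ZC * HC * ZCᵀ) *ᵥ x = 0 := by
    have := h.symm
    simp only [Matrix.add_mulVec, dotProduct_add, star_trivial] at this ⊢
    linarith [this]
  have hz1 : x ⬝ᵥ K *ᵥ x = 0 := by linarith
  have hz2 : x ⬝ᵥ ((KG * ZN) * HN * (KG * ZN)ᵀ) *ᵥ x = 0 := by linarith
  have hz3 : x ⬝ᵥ (ZC * HC * ZCᵀ) *ᵥ x = 0 := by linarith
  -- from hz1 : K x = 0
  have hKx : K *ᵥ x = 0 := by
    have := (hKpsd.dotProduct_mulVec_zero_iff x).mp (by simpa using hz1)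
    exact this
  -- from hz2 : (KG ZN)ᵀ x = 0
  have hconj : ∀ (m : ℕ) (A : Matrix (Fin n1 ⊕ (Fin n2 ⊕ Fin n3)) (Fin m) ℝ)
      (H : Matrix (Fin m) (Fin m) ℝ),
      x ⬝ᵥ (A * H * Aᵀ) *ᵥ x = (Aᵀ *ᵥ x) ⬝ᵥ H *ᵥ (Aᵀ *ᵥ x) := by
    intro m A H
    rw [← Matrix.mulVec_mulVec, ← Matrix.mulVec_mulVec, Matrix.dotProduct_mulVec x A,
      ← Matrix.mulVec_transpose]
  have hNy : (KG * ZN)ᵀ *ᵥ x = 0 := by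
    by_contra hne
    have := hHN.dotProduct_mulVec_pos hne
    rw [star_trivial] at this
    rw [hconj n2 (KG * ZN) HN] at hz2
    linarith
  have hCz : ZCᵀ *ᵥ x = 0 := by
    by_contra hne
    have := hHC.dotProduct_mulVec_pos hne
    rw [star_trivial] at this
    rw [hconj n3 ZC HC] at hz3
    linarith
  -- KG x is orthogonal to the kernel of K
  have hperp : ∀ w, K *ᵥ w = 0 → w ⬝ᵥ (KG *ᵥ x) = 0 := by
    intro w hw
    have hwmem : w ∈ LinearMap.range (Matrix.fromCols ZN ZC).mulVecLin := by
      rw [hZspan]; exact hw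
    obtain ⟨y, hy⟩ := hwmem
    have hy' : ZN *ᵥ (y ∘ Sum.inl) + ZC *ᵥ (y ∘ Sum.inr) = w := by
      rw [← hy]
      simp only [Matrix.mulVecLin_apply]
      rw [← Matrix.fromCols_mulVec_sumElim]
      exact congrArg (fun v => Matrix.fromCols ZN ZC *ᵥ v) (Sum.elim_comp_inl_inr y)
    rw [← hy', add_dotProduct]
    have e1 : (ZN *ᵥ (y ∘ Sum.inl)) ⬝ᵥ (KG *ᵥ x) = (y ∘ Sum.inl) ⬝ᵥ (ZNᵀ *ᵥ (KG *ᵥ x)) := by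
      rw [dotProduct_comm, Matrix.dotProduct_mulVec, ← Matrix.mulVec_transpose,
        dotProduct_comm]
    have e2 : (ZC *ᵥ (y ∘ Sum.inr)) ⬝ᵥ (KG *ᵥ x) = (KG *ᵥ (ZC *ᵥ (y ∘ Sum.inr))) ⬝ᵥ x := by
      rw [Matrix.dotProduct_mulVec, ← Matrix.mulVec_transpose, hKG, dotProduct_comm]
    have hZNKGx : ZNᵀ *ᵥ (KG *ᵥ x) = 0 := by
      have : (KG * ZN)ᵀ = ZNᵀ * KG := by rw [Matrix.transpose_mul, hKG]
      rw [this, ← Matrix.mulVec_mulVec] at hNy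
      exact hNy
    rw [e1, e2, hZNKGx, hKGZC, dotProduct_zero, zero_dotProduct, add_zero]
  -- decompose x in the W basis
  have hWdet : IsUnit W.det := (Matrix.isUnit_iff_isUnit_det W).mp hW
  set t : Fin n1 ⊕ (Fin n2 ⊕ Fin n3) → ℝ := W⁻¹ *ᵥ x with ht
  have hxt : W *ᵥ t = x := by
    rw [ht, Matrix.mulVec_mulVec, Matrix.mul_nonsing_inv _ hWdet, Matrix.one_mulVec]
  have htelim : t = Sum.elim (t ∘ Sum.inl) (Sum.elim (t ∘ Sum.inr ∘ Sum.inl)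
      (t ∘ Sum.inr ∘ Sum.inr)) := by
    funext i
    rcases i with i | i | i <;> rfl
  -- first component of t vanishes
  have hcanKx : (Wᵀ * K * W) *ᵥ t = 0 := by
    rw [Matrix.mul_assoc, ← Matrix.mulVec_mulVec, ← Matrix.mulVec_mulVec, hxt, hKx,
      Matrix.mulVec_zero]
  have ht1 : t ∘ Sum.inl = 0 := by
    rw [hcanK] at hcanKx
    rw [htelim, Matrix.fromBlocks_mulVec] at hcanKx
    have := congrFun hcanKx
    funext i
    have h1 := this (Sum.inl i)
    simpa using h1
  -- second component of t vanishes
  have ht2 : t ∘ Sum.inr ∘ Sum.inl = 0 := by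
    funext i
    have hwker : K *ᵥ (W *ᵥ (Sum.elim 0 (Sum.elim (Pi.single i 1) 0) :
        Fin n1 ⊕ (Fin n2 ⊕ Fin n3) → ℝ)) = 0 := by
      apply transpose_mulVec_eq_zero hW
      have : Wᵀ *ᵥ (K *ᵥ (W *ᵥ (Sum.elim 0 (Sum.elim (Pi.single i 1) 0) :
          Fin n1 ⊕ (Fin n2 ⊕ Fin n3) → ℝ))) = (Wᵀ * K * W) *ᵥ
          (Sum.elim 0 (Sum.elim (Pi.single i 1) 0)) := by
        rw [Matrix.mul_assoc, ← Matrix.mulVec_mulVec, ← Matrix.mulVec_mulVec]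
      rw [this, hcanK, Matrix.fromBlocks_mulVec]
      funext j
      rcases j with j | j <;> simp
    have hdp := hperp _ hwker
    have hstep : Wᵀ *ᵥ (KG *ᵥ x) = (Wᵀ * KG * W) *ᵥ t := by
      rw [Matrix.mul_assoc, ← Matrix.mulVec_mulVec, ← Matrix.mulVec_mulVec, hxt]
    rw [dotProduct_comm, Matrix.dotProduct_mulVec, ← Matrix.mulVec_transpose,
      dotProduct_comm, hstep, hcanKG] at hdp
    rw [htelim, ht1] at hdp
    simp only [Matrix.fromBlocks_mulVec, sumElim_dotProduct_sumElim,
      Matrix.mulVec_zero, Matrix.zero_mulVec, add_zero, zero_add, Sum.elim_comp_inl,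
      Sum.elim_comp_inr, zero_dotProduct, dotProduct_zero,
      single_dotProduct, Matrix.mulVec_diagonal, Pi.zero_apply, mul_zero] at hdp
    simp only [one_mul] at hdp
    exact (mul_eq_zero.mp hdp).resolve_left (hΛ2 i)
  -- hence KG x = 0
  have hKGx0 : KG *ᵥ x = 0 := by
    apply transpose_mulVec_eq_zero hW
    have : Wᵀ *ᵥ (KG *ᵥ x) = (Wᵀ * KG * W) *ᵥ t := by
      rw [Matrix.mul_assoc, ← Matrix.mulVec_mulVec, ← Matrix.mulVec_mulVec, hxt]
    rw [this, hcanKG, htelim, ht1, ht2, Matrix.fromBlocks_mulVec, Matrix.fromBlocks_mulVec]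
    funext j
    rcases j with j | j | j <;> simp
  -- x lies in the range of ZC
  have hxmem : x ∈ LinearMap.range ZC.mulVecLin := by
    rw [hZCspan]
    exact ⟨hKx, hKGx0⟩
  obtain ⟨c, hc⟩ := hxmem
  have hxx : x ⬝ᵥ x = 0 := by
    rw [← hc]
    simp only [Matrix.mulVecLin_apply]
    rw [dotProduct_comm, Matrix.dotProduct_mulVec, ← Matrix.mulVec_transpose]
    rw [Matrix.mulVecLin_apply] at hc
    rw [hc, hCz, zero_dotProduct]
  exact (dotProduct_self_eq_zero).mp hxx
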